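/- Let B be a real n×n matrix (n ≥ 2) whose complex characteristic polynomial has simple roots iω and −iω for some real ω > 0, while all its other roots have real part < 0, and let ψ span the kernel of the Lie derivative L_B on real homogeneous degree-2 polynomials in ℝ[x₁,…,xₙ]. Let C be the (n+1)×(n+1) real block-diagonal matrix diag(0, B), acting on variables (x₀, x₁, …, xₙ). Then the kernel of the Lie derivative L_C restricted to homogeneous degree-3 polynomials in ℝ[x₀, x₁, …, xₙ] is two-dimensional and spanned by x₀³ and x₀·ψ (with ψ regarded as a polynomial in x₁,…,xₙ). -/

import Mathlib

open MvPolynomial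

/-- The Lie derivative of a polynomial `ψ` along the linear vector field `x ↦ Bx`. -/
noncomputable def lieDeriv {m : ℕ} (B : Matrix (Fin m) (Fin m) ℝ)
    (ψ : MvPolynomial (Fin m) ℝ) : MvPolynomial (Fin m) ℝ :=
  ∑ i, pderiv i ψ * ∑ j, C (B i j) * X j

namespace LieHelper

open Module Matrix

variable {m : ℕ} {R : Type*} [CommRing R]

noncomputable def LD (A : Matrix (Fin m) (Fin m) R) : Module.End R (MvPolynomial (Fin m) R) where
  toFun ψ := ∑ i, pderiv i ψ * ∑ j, C (A i j) * X j
  map_add' f g := by simp [add_mul, Finset.sum_add_distrib]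
  map_smul' c f := by simp [Finset.smul_sum, smul_mul_assoc]

noncomputable def Mend (A : Matrix (Fin m) (Fin m) R) : Module.End R (Fin m → R) :=
  Matrix.toLinAlgEquiv' Aᵀ

noncomputable def linF : (Fin m → R) →ₗ[R] MvPolynomial (Fin m) R where
  toFun v := ∑ i, C (v i) * X i
  map_add' u v := by simp [add_mul, Finset.sum_add_distrib]
  map_smul' c v := by
    simp [Finset.smul_sum, smul_mul_assoc, MvPolynomial.smul_eq_C_mul, mul_assoc]

lemma LD_apply (A : Matrix (Fin m) (Fin m) R) (f : MvPolynomial (Fin m) R) :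
    LD A f = ∑ i, pderiv i f * ∑ j, C (A i j) * X j := rfl

lemma linF_apply (v : Fin m → R) : linF v = ∑ i, C (v i) * X i := rfl

lemma LD_X (A : Matrix (Fin m) (Fin m) R) (j : Fin m) : LD A (X j) = linF (A j) := by
  rw [LD_apply, linF_apply]
  rw [Finset.sum_eq_single j]
  · simp
  · intro i _ hij
    simp [pderiv_X, Pi.single_apply, hij.symm]
  · simp

lemma LD_one (A : Matrix (Fin m) (Fin m) R) : LD A 1 = 0 := by
  simp [LD_apply]

lemma LD_mul (A : Matrix (Fin m) (Fin m) R) (f g : MvPolynomial (Fin m) R) :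
    LD A (f * g) = LD A f * g + f * LD A g := by
  simp only [LD_apply, pderiv_mul, add_mul, Finset.sum_add_distrib, Finset.sum_mul,
    Finset.mul_sum]
  refine congrArg₂ (· + ·) ?_ ?_ <;> exact Finset.sum_congr rfl fun i _ => Finset.sum_congr rfl fun j _ => by ring

lemma LD_linF (A : Matrix (Fin m) (Fin m) R) (v : Fin m → R) :
    LD A (linF v) = linF (Mend A v) := by
  have : (linF v : MvPolynomial (Fin m) R) = ∑ j, v j • X j := by
    simp [linF_apply, MvPolynomial.smul_eq_C_mul]
  have h2 : (Mend A) v = ∑ j, v j • A j := by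
    ext l
    simp [Mend, Matrix.toLinAlgEquiv'_apply, Matrix.mulVec, dotProduct,
      Matrix.transpose_apply, mul_comm, Finset.sum_apply]
  rw [this, h2, map_sum, map_sum]
  simp only [_root_.map_smul, LD_X]

lemma step_identity (A : Matrix (Fin m) (Fin m) ℂ) (lam c : ℂ) (v : Fin m → ℂ)
    (p : MvPolynomial (Fin m) ℂ) :
    (LD A - (lam + c) • 1) (linF v * p)
      = linF ((Mend A - lam • 1) v) * p
        + linF v * ((LD A - c • 1) p) := by
  simp only [LinearMap.sub_apply, LinearMap.smul_apply, Module.End.one_apply, map_sub,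
    _root_.map_smul, LD_mul, LD_linF]
  simp only [MvPolynomial.smul_eq_C_mul, map_add]
  ring

lemma key (A : Matrix (Fin m) (Fin m) ℂ) (lam c : ℂ) (N : ℕ) :
    ∀ (a b : ℕ) (v : Fin m → ℂ) (p : MvPolynomial (Fin m) ℂ), a + b = N →
    ((Mend A - lam • 1) ^ a) v = 0 →
    ((LD A - c • 1) ^ b) p = 0 →
    ((LD A - (lam + c) • 1) ^ N) (linF v * p) = 0 := by
  induction N with
  | zero =>
    intro a b v p hab hv hp
    have ha : a = 0 := by omega
    have hb : b = 0 := by omega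
    subst ha; subst hb
    simp only [pow_zero, Module.End.one_apply] at hv hp ⊢
    simp [hv]
  | succ N ih =>
    intro a b v p hab hv hp
    rcases Nat.eq_zero_or_pos a with ha | ha
    · subst ha
      simp only [pow_zero, Module.End.one_apply] at hv
      simp [hv]
    rcases Nat.eq_zero_or_pos b with hb | hb
    · subst hb
      simp only [pow_zero, Module.End.one_apply] at hp
      simp [hp]
    obtain ⟨a', rfl⟩ : ∃ a', a = a' + 1 := ⟨a - 1, by omega⟩
    obtain ⟨b', rfl⟩ : ∃ b', b = b' + 1 := ⟨b - 1, by omega⟩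
    have hv' : ((Mend A - lam • 1) ^ a')
        (((Mend A - lam • 1)) v) = 0 := by
      rw [← Module.End.mul_apply, ← pow_succ]; exact hv
    have hp' : ((LD A - c • 1) ^ b') ((LD A - c • 1) p) = 0 := by
      rw [← Module.End.mul_apply, ← pow_succ]; exact hp
    rw [pow_succ, Module.End.mul_apply, step_identity, map_add,
      ih a' (b' + 1) _ p (by omega) hv' hp,
      ih (a' + 1) b' v _ (by omega) hv hp', add_zero]


lemma prod_key (A : Matrix (Fin m) (Fin m) ℂ) :
    ∀ (k : ℕ) (v : Fin k → Fin m → ℂ) (μ : Fin k → ℂ),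
    (∀ i, ∃ a : ℕ, ((Mend A - μ i • 1) ^ a) (v i) = 0) →
    ∃ N : ℕ, ((LD A - (∑ i, μ i) • 1) ^ N) (∏ i, linF (v i)) = 0 := by
  intro k
  induction k with
  | zero =>
    intro v μ _
    refine ⟨1, ?_⟩
    rw [pow_one]
    simp [LinearMap.sub_apply, LD_one]
  | succ k ih =>
    intro v μ h
    obtain ⟨N, hN⟩ := ih (fun i => v i.succ) (fun i => μ i.succ) (fun i => h i.succ)
    obtain ⟨a, ha⟩ := h 0
    refine ⟨a + N, ?_⟩
    rw [Fin.prod_univ_succ, Fin.sum_univ_succ]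
    have := key A (μ 0) (∑ i : Fin k, μ i.succ) (a + N) a N (v 0)
      (∏ i : Fin k, linF (v i.succ)) rfl ha hN
    exact this

/-- The set of generalized eigenvectors of the adjoint action. -/
def GE (A : Matrix (Fin m) (Fin m) ℂ) : Set (Fin m → ℂ) :=
  ⋃ μ : ℂ, ((Mend A).maxGenEigenspace μ : Set (Fin m → ℂ))

noncomputable def Wk (A : Matrix (Fin m) (Fin m) ℂ) (k : ℕ) :
    Submodule ℂ (MvPolynomial (Fin m) ℂ) :=
  Submodule.span ℂ
    {q | ∃ v : Fin k → (Fin m → ℂ), (∀ i, v i ∈ GE A) ∧ q = ∏ i, linF (v i)}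

lemma span_GE (A : Matrix (Fin m) (Fin m) ℂ) : Submodule.span ℂ (GE A) = ⊤ := by
  rw [GE, ← Submodule.iSup_eq_span]
  exact Module.End.iSup_maxGenEigenspace_eq_top _

lemma mul_linF_mem (A : Matrix (Fin m) (Fin m) ℂ) {k : ℕ} (w : Fin m → ℂ)
    {q : MvPolynomial (Fin m) ℂ} (hq : q ∈ Wk A k) : linF w * q ∈ Wk A (k + 1) := by
  induction hq using Submodule.span_induction with
  | mem q hq =>
    obtain ⟨v, hv, rfl⟩ := hq
    have hw : w ∈ Submodule.span ℂ (GE A) := by rw [span_GE A]; trivial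
    induction hw using Submodule.span_induction with
    | mem w hw =>
      apply Submodule.subset_span
      refine ⟨Fin.cons w v, ?_, ?_⟩
      · intro i
        refine Fin.cases hw (fun j => hv j) i
      · rw [Fin.prod_univ_succ]
        simp [Fin.cons_zero, Fin.cons_succ]
    | zero => simp only [map_zero, zero_mul]; exact zero_mem _
    | add x y _ _ hx hy => rw [map_add, add_mul]; exact add_mem hx hy
    | smul c x _ hx => rw [_root_.map_smul, smul_mul_assoc]; exact Submodule.smul_mem _ _ hx
  | zero => rw [mul_zero]; exact zero_mem _
  | add x y _ _ hx hy => rw [mul_add]; exact add_mem hx hy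
  | smul c x _ hx => rw [mul_smul_comm]; exact Submodule.smul_mem _ _ hx

lemma monomial_mem (A : Matrix (Fin m) (Fin m) ℂ) :
    ∀ (k : ℕ) (d : Fin m →₀ ℕ), (d.sum fun _ e => e) = k →
      (monomial d (1 : ℂ) : MvPolynomial (Fin m) ℂ) ∈ Wk A k := by
  intro k
  induction k with
  | zero =>
    intro d hd
    have : d = 0 := by
      ext i
      by_contra hne
      have hi : i ∈ d.support := Finsupp.mem_support_iff.2 hne
      have : 0 < d.sum fun _ e => e :=
        Finset.sum_pos' (fun _ _ => Nat.zero_le _) ⟨i, hi, Nat.pos_of_ne_zero hne⟩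
      omega
    subst this
    apply Submodule.subset_span
    exact ⟨Fin.elim0, fun i => i.elim0, by simp [monomial_zero']⟩
  | succ k ih =>
    intro d hd
    have hdne : d ≠ 0 := by
      rintro rfl
      simp at hd
    obtain ⟨a, ha⟩ : ∃ a, d a ≠ 0 := by
      by_contra h
      push_neg at h
      exact hdne (Finsupp.ext fun i => h i)
    set d' : Fin m →₀ ℕ := d - Finsupp.single a 1 with hd'
    have hsplit : d = Finsupp.single a 1 + d' := by
      ext i
      rcases eq_or_ne i a with rfl | hia
      · simp [hd', Finsupp.single_apply]
        omega
      · simp [hd', Finsupp.single_apply, hia, Ne.symm hia]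
    have hsum' : (d'.sum fun _ e => e) = k := by
      have h2 := hd
      rw [hsplit, Finsupp.sum_add_index' (fun _ => rfl) (fun _ _ _ => rfl)] at h2
      simp [Finsupp.sum_single_index] at h2
      omega
    have hXa : (X a : MvPolynomial (Fin m) ℂ) = linF (Pi.single a 1) := by
      rw [linF_apply, Finset.sum_eq_single a]
      · simp
      · intro i _ hia
        simp [Pi.single_apply, hia]
      · simp
    have : (monomial d (1 : ℂ) : MvPolynomial (Fin m) ℂ) = X a * monomial d' 1 := by
      rw [hsplit, X, monomial_mul, one_mul]
    rw [this, hXa]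
    exact mul_linF_mem A _ (ih d' hsum')

lemma homog_mem (A : Matrix (Fin m) (Fin m) ℂ) {k : ℕ} {φ : MvPolynomial (Fin m) ℂ}
    (hφ : φ.IsHomogeneous k) : φ ∈ Wk A k := by
  rw [← support_sum_monomial_coeff φ]
  apply Submodule.sum_mem
  intro d hd
  have hcoeff : coeff d φ ≠ 0 := mem_support_iff.1 hd
  have hdeg : (d.sum fun _ e => e) = k := by
    have := hφ hcoeff
    simpa [Finsupp.weight_apply, Finsupp.sum] using this
  have : (monomial d (coeff d φ) : MvPolynomial (Fin m) ℂ)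
      = coeff d φ • monomial d 1 := by
    rw [smul_monomial, smul_eq_mul, mul_one]
  rw [this]
  exact Submodule.smul_mem _ _ (monomial_mem A k d hdeg)


lemma LD_hom_eq_zero (A : Matrix (Fin m) (Fin m) ℂ) {k : ℕ}
    (hsum : ∀ μ : Fin k → ℂ, (∀ i, (Mend A).HasEigenvalue (μ i)) → ∑ i, μ i ≠ 0)
    {φ : MvPolynomial (Fin m) ℂ} (hφ : φ.IsHomogeneous k) (h0 : LD A φ = 0) : φ = 0 := by
  have hW : φ ∈ Wk A k := homog_mem A hφ
  set S : Submodule ℂ (MvPolynomial (Fin m) ℂ) :=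
    ⨆ c : ℂ, ⨆ _ : c ≠ 0, (LD A).genEigenspace c ⊤ with hS
  have hWS : Wk A k ≤ S := by
    rw [Wk]
    apply Submodule.span_le.2
    rintro q ⟨v, hv, rfl⟩
    by_cases hz : ∃ i, v i = 0
    · obtain ⟨i, hi⟩ := hz
      have hzero : (∏ i, linF (v i) : MvPolynomial (Fin m) ℂ) = 0 := by
        apply Finset.prod_eq_zero (Finset.mem_univ i)
        rw [hi, map_zero]
      rw [SetLike.mem_coe, hzero]
      exact zero_mem _
    push_neg at hz
    have hmu : ∀ i, ∃ μi : ℂ, (Mend A).HasEigenvalue μi ∧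
        ∃ a : ℕ, ((Mend A - μi • 1) ^ a) (v i) = 0 := by
      intro i
      have hvi := hv i
      rw [GE, Set.mem_iUnion] at hvi
      obtain ⟨μi, hμi⟩ := hvi
      rw [SetLike.mem_coe, Module.End.mem_maxGenEigenspace] at hμi
      obtain ⟨a, ha⟩ := hμi
      refine ⟨μi, ?_, a, ha⟩
      have hmem : v i ∈ (Mend A).genEigenspace μi (a : ℕ∞) := by
        rw [Module.End.genEigenspace_nat, LinearMap.mem_ker]
        exact ha
      have hne : (Mend A).genEigenspace μi (a : ℕ∞) ≠ ⊥ :=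
        Submodule.ne_bot_iff _ |>.mpr ⟨v i, hmem, hz i⟩
      exact Module.End.hasEigenvalue_of_hasGenEigenvalue (k := a) hne
    choose μf hμf using hmu
    obtain ⟨N, hN⟩ := prod_key A _ v μf (fun i => (hμf i).2)
    have hc : (∑ i, μf i) ≠ 0 := hsum μf (fun i => (hμf i).1)
    rw [SetLike.mem_coe, hS]
    apply Submodule.mem_iSup_of_mem (∑ i, μf i)
    apply Submodule.mem_iSup_of_mem hc
    rw [Module.End.mem_genEigenspace_top]
    exact ⟨N, by rw [LinearMap.mem_ker]; exact hN⟩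
  have hφ0 : φ ∈ (LD A).genEigenspace 0 ⊤ := by
    rw [Module.End.mem_genEigenspace_top]
    refine ⟨1, ?_⟩
    rw [LinearMap.mem_ker, pow_one]
    simp [LinearMap.sub_apply, h0]
  have hind := (LD A).independent_genEigenspace (⊤ : ℕ∞)
  have hdisj : Disjoint ((LD A).genEigenspace 0 ⊤) S := by
    have := hind 0
    simpa [hS] using this
  have : φ ∈ (⊥ : Submodule ℂ (MvPolynomial (Fin m) ℂ)) :=
    hdisj.le_bot (Submodule.mem_inf.2 ⟨hφ0, hWS hW⟩)
  simpa using this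

section RealPart

variable {n : ℕ}

lemma LD_rename (B : Matrix (Fin n) (Fin n) ℝ) (Cm : Matrix (Fin (n+1)) (Fin (n+1)) ℝ)
    (hC0' : ∀ i, Cm i 0 = 0) (hCB : ∀ i j : Fin n, Cm i.succ j.succ = B i j)
    (p : MvPolynomial (Fin n) ℝ) :
    LD Cm (rename Fin.succ p) = rename Fin.succ (LD B p) := by
  rw [LD_apply, LD_apply, Fin.sum_univ_succ]
  have h0 : pderiv (0 : Fin (n+1)) (rename Fin.succ p) = 0 := by
    apply pderiv_eq_zero_of_notMem_vars
    intro h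
    obtain ⟨j, -, hj⟩ := mem_vars_rename _ _ h
    exact (Fin.succ_ne_zero j) hj
  rw [h0, zero_mul, zero_add, map_sum]
  refine Finset.sum_congr rfl fun i _ => ?_
  rw [pderiv_rename (Fin.succ_injective n), _root_.map_mul]
  congr 1
  rw [Fin.sum_univ_succ, hC0' _, map_sum]
  simp only [_root_.map_mul, rename_C, rename_X, hCB]
  simp

lemma LD_X0 (Cm : Matrix (Fin (n+1)) (Fin (n+1)) ℝ) (hC0 : ∀ j, Cm 0 j = 0) :
    LD Cm (X 0) = 0 := by
  rw [LD_X]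
  have : Cm 0 = 0 := funext hC0
  rw [this, map_zero]

lemma LD_X0_pow (Cm : Matrix (Fin (n+1)) (Fin (n+1)) ℝ) (hC0 : ∀ j, Cm 0 j = 0) (k : ℕ) :
    LD Cm ((X 0 : MvPolynomial (Fin (n+1)) ℝ) ^ k) = 0 := by
  induction k with
  | zero => simpa using LD_one Cm
  | succ k ih => rw [pow_succ, LD_mul, ih, zero_mul, LD_X0 Cm hC0, mul_zero, add_zero]

lemma finSuccEquiv_rename_succ (p : MvPolynomial (Fin n) ℝ) :
    finSuccEquiv ℝ n (rename Fin.succ p) = Polynomial.C p := by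
  have h : ((finSuccEquiv ℝ n).toAlgHom.comp
        (rename Fin.succ : MvPolynomial (Fin n) ℝ →ₐ[ℝ] MvPolynomial (Fin (n+1)) ℝ))
      = Polynomial.CAlgHom := by
    apply MvPolynomial.algHom_ext
    intro i
    simp [finSuccEquiv_X_succ, Polynomial.CAlgHom]
  exact DFunLike.congr_fun h p

lemma decomp (φ : MvPolynomial (Fin (n+1)) ℝ) (hφ : φ.IsHomogeneous 3) :
    φ = ∑ k ∈ Finset.range 4, X 0 ^ k * rename Fin.succ ((finSuccEquiv ℝ n φ).coeff k) := by
  have hdeg : (finSuccEquiv ℝ n φ).natDegree < 4 := by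
    rw [natDegree_finSuccEquiv]
    have h1 := degreeOf_le_totalDegree φ 0
    have h2 := hφ.totalDegree_le
    omega
  apply (finSuccEquiv ℝ n).injective
  rw [map_sum]
  conv_lhs => rw [Polynomial.as_sum_range' (finSuccEquiv ℝ n φ) 4 hdeg]
  refine Finset.sum_congr rfl fun k _ => ?_
  rw [_root_.map_mul, map_pow, finSuccEquiv_X_zero, finSuccEquiv_rename_succ,
    ← Polynomial.C_mul_X_pow_eq_monomial, mul_comm]

lemma coeffs_zero (q : ℕ → MvPolynomial (Fin n) ℝ)
    (h : ∑ k ∈ Finset.range 4, (X 0 : MvPolynomial (Fin (n+1)) ℝ) ^ k * rename Fin.succ (q k)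
      = 0) :
    ∀ k < 4, q k = 0 := by
  intro k hk
  have h2 : ∑ j ∈ Finset.range 4,
      Polynomial.C (q j) * Polynomial.X ^ j = (0 : Polynomial (MvPolynomial (Fin n) ℝ)) := by
    have h3 := congrArg (finSuccEquiv ℝ n) h
    rw [map_sum, map_zero] at h3
    rw [← h3]
    refine Finset.sum_congr rfl fun j _ => ?_
    rw [_root_.map_mul, map_pow, finSuccEquiv_X_zero, finSuccEquiv_rename_succ, mul_comm]
  have h4 := congrArg (fun p => Polynomial.coeff p k) h2
  simp only [Polynomial.finset_sum_coeff, Polynomial.coeff_C_mul, Polynomial.coeff_X_pow,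
    Polynomial.coeff_zero, mul_ite, mul_one, mul_zero] at h4
  rwa [Finset.sum_ite_eq (Finset.range 4) k, if_pos (Finset.mem_range.2 hk)] at h4

end RealPart
lemma charpoly_transpose (M : Matrix (Fin m) (Fin m) R) : Mᵀ.charpoly = M.charpoly := by
  rw [Matrix.charpoly, Matrix.charpoly, ← Matrix.det_transpose (charmatrix M)]
  congr 1
  ext i j
  rcases eq_or_ne i j with rfl | hij
  · simp [charmatrix_apply_eq]
  · simp [charmatrix_apply_ne _ _ _ hij, charmatrix_apply_ne _ _ _ (Ne.symm hij),
      Matrix.transpose_apply]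

lemma eig_isRoot (A : Matrix (Fin m) (Fin m) ℂ) {μ : ℂ}
    (h : (Mend A).HasEigenvalue μ) : A.charpoly.IsRoot μ := by
  have h1 : (minpoly ℂ (Mend A)).IsRoot μ := Module.End.hasEigenvalue_iff_isRoot.1 h
  have h2 : minpoly ℂ (Mend A) ∣ Aᵀ.charpoly := by
    apply minpoly.dvd
    rw [Mend]
    have h5 := Polynomial.aeval_algHom_apply
      (Matrix.toLinAlgEquiv' : Matrix (Fin m) (Fin m) ℂ ≃ₐ[ℂ] _).toAlgHom Aᵀ Aᵀ.charpoly
    exact h5.trans (by rw [Matrix.aeval_self_charpoly, map_zero])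
  rw [← charpoly_transpose A]
  exact h1.dvd h2

lemma map_LD (B : Matrix (Fin m) (Fin m) ℝ) (φ : MvPolynomial (Fin m) ℝ) :
    MvPolynomial.map (algebraMap ℝ ℂ) (LD B φ)
      = LD (B.map (algebraMap ℝ ℂ)) (MvPolynomial.map (algebraMap ℝ ℂ) φ) := by
  rw [LD_apply, LD_apply, map_sum]
  refine Finset.sum_congr rfl fun i _ => ?_
  rw [_root_.map_mul, pderiv_map, map_sum]
  simp only [_root_.map_mul, map_C, map_X, Matrix.map_apply]

lemma lieDeriv_hom_eq_zero (B : Matrix (Fin m) (Fin m) ℝ) {k : ℕ}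
    (hsum : ∀ μ : Fin k → ℂ,
      (∀ i, (B.charpoly.map (algebraMap ℝ ℂ)).IsRoot (μ i)) → ∑ i, μ i ≠ 0)
    {φ : MvPolynomial (Fin m) ℝ} (hφ : φ.IsHomogeneous k) (h0 : LD B φ = 0) : φ = 0 := by
  set f := algebraMap ℝ ℂ with hf
  set A := B.map f with hA
  have h1 : LD A (MvPolynomial.map f φ) = 0 := by
    rw [← map_LD, h0, map_zero]
  have h2 : (MvPolynomial.map f φ).IsHomogeneous k := hφ.map f
  have h3 : MvPolynomial.map f φ = 0 := by
    refine LD_hom_eq_zero A (fun μ hμ => hsum μ (fun i => ?_)) h2 h1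
    have h4 := eig_isRoot A (hμ i)
    rwa [hA, Matrix.charpoly_map] at h4
  have hinj : Function.Injective (MvPolynomial.map (σ := Fin m) f) :=
    MvPolynomial.map_injective f f.injective
  have : MvPolynomial.map f φ = MvPolynomial.map f 0 := by rw [h3, map_zero]
  exact hinj this


lemma root_classify {N : ℕ} (ω : ℝ) (hω : 0 < ω) (μ : Fin N → ℂ) (hμ : ∀ i, (μ i).re < 0)
    (P : Polynomial ℂ)
    (hP : P = (Polynomial.X - Polynomial.C (Complex.I * ω)) *
      (Polynomial.X - Polynomial.C (-(Complex.I * ω))) *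
      ∏ i, (Polynomial.X - Polynomial.C (μ i)))
    {z : ℂ} (hz : P.IsRoot z) :
    z.re ≤ 0 ∧ (z.re = 0 → z = Complex.I * ω ∨ z = -(Complex.I * ω)) := by
  rw [hP, Polynomial.IsRoot, Polynomial.eval_mul, Polynomial.eval_mul] at hz
  simp only [Polynomial.eval_sub, Polynomial.eval_X, Polynomial.eval_C, Polynomial.eval_prod,
    mul_eq_zero, Finset.prod_eq_zero_iff, sub_eq_zero] at hz
  rcases hz with (h | h) | ⟨i, -, h⟩
  · subst h
    refine ⟨le_of_eq ?_, fun _ => Or.inl rfl⟩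
    simp [Complex.mul_re]
  · subst h
    refine ⟨le_of_eq ?_, fun _ => Or.inr rfl⟩
    simp [Complex.mul_re]
  · subst h
    exact ⟨le_of_lt (hμ i), fun hre => absurd hre (ne_of_lt (hμ i))⟩

lemma im_I_mul (ω : ℝ) : (Complex.I * ω).im = ω := by simp

end LieHelper

open LieHelper Module Matrix

/-- Let `B` be a real `n×n` matrix (`n ≥ 2`) whose complex characteristic polynomial has simple
roots `iω, −iω` (`ω > 0`), all other roots having real part `< 0`, and let `ψ` span the kernel
of `L_B` on homogeneous degree-2 polynomials. Let `Cm = diag(0, B)` act on the variables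
`x₀, x₁, …, xₙ`. Then the kernel of `L_{Cm}` on homogeneous degree-3 polynomials in
`x₀, …, xₙ` is two-dimensional, spanned by `x₀³` and `x₀·ψ`. -/
theorem kernel_lieDeriv_extended_degree_three {n : ℕ} (hn : 2 ≤ n)
    (B : Matrix (Fin n) (Fin n) ℝ) (ω : ℝ) (hω : 0 < ω) (μ : Fin (n - 2) → ℂ)
    (hμ : ∀ i, (μ i).re < 0)
    (hchar : B.charpoly.map (algebraMap ℝ ℂ) =
      (Polynomial.X - Polynomial.C (Complex.I * ω)) *
      (Polynomial.X - Polynomial.C (-(Complex.I * ω))) *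
      ∏ i, (Polynomial.X - Polynomial.C (μ i)))
    (ψ : MvPolynomial (Fin n) ℝ) (hψhom : ψ.IsHomogeneous 2) (hψne : ψ ≠ 0)
    (hψker : lieDeriv B ψ = 0)
    (hψspan : ∀ φ : MvPolynomial (Fin n) ℝ, φ.IsHomogeneous 2 → lieDeriv B φ = 0 →
      ∃ c : ℝ, φ = c • ψ)
    (Cm : Matrix (Fin (n + 1)) (Fin (n + 1)) ℝ)
    (hC0 : ∀ j, Cm 0 j = 0) (hC0' : ∀ i, Cm i 0 = 0)
    (hCB : ∀ i j : Fin n, Cm i.succ j.succ = B i j) :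
    lieDeriv Cm (X 0 ^ 3) = 0 ∧
    lieDeriv Cm (X 0 * rename Fin.succ ψ) = 0 ∧
    (∀ a b : ℝ, a • (X 0 ^ 3 : MvPolynomial (Fin (n + 1)) ℝ)
        + b • (X 0 * rename Fin.succ ψ) = 0 → a = 0 ∧ b = 0) ∧
    (∀ φ : MvPolynomial (Fin (n + 1)) ℝ, φ.IsHomogeneous 3 → lieDeriv Cm φ = 0 →
      ∃ a b : ℝ, φ = a • (X 0 ^ 3 : MvPolynomial (Fin (n + 1)) ℝ)
        + b • (X 0 * rename Fin.succ ψ)) := by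
  have hLDψ : LD B ψ = 0 := hψker
  -- classification of eigenvalues
  have hprop : ∀ z : ℂ, (B.charpoly.map (algebraMap ℝ ℂ)).IsRoot z →
      z.re ≤ 0 ∧ (z.re = 0 → z = Complex.I * ω ∨ z = -(Complex.I * ω)) :=
    fun z hz => root_classify ω hω μ hμ _ hchar hz
  have hIω : (Complex.I * (ω : ℂ)) ≠ 0 := by
    intro h
    have := congrArg Complex.im h
    rw [im_I_mul] at this
    simp at this
    exact absurd this (ne_of_gt hω)
  have hW : ∀ z : ℂ, (z = Complex.I * ω ∨ z = -(Complex.I * ω)) → (z.im = ω ∨ z.im = -ω) := by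
    intro z h
    rcases h with rfl | rfl
    · left; simp
    · right; simp
  have hsum1 : ∀ μf : Fin 1 → ℂ,
      (∀ i, (B.charpoly.map (algebraMap ℝ ℂ)).IsRoot (μf i)) → ∑ i, μf i ≠ 0 := by
    intro μf h hzero
    rw [Fin.sum_univ_one] at hzero
    obtain ⟨h1, h2⟩ := hprop _ (h 0)
    rw [hzero] at h2
    rcases h2 (by simp) with hc | hc
    · exact hIω hc.symm
    · exact hIω (neg_eq_zero.mp hc.symm)
  have hsum3 : ∀ μf : Fin 3 → ℂ,
      (∀ i, (B.charpoly.map (algebraMap ℝ ℂ)).IsRoot (μf i)) → ∑ i, μf i ≠ 0 := by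
    intro μf h hzero
    rw [Fin.sum_univ_three] at hzero
    have H0 := hprop _ (h 0); have H1 := hprop _ (h 1); have H2 := hprop _ (h 2)
    have hre : (μf 0).re + (μf 1).re + (μf 2).re = 0 := by
      have := congrArg Complex.re hzero
      simpa [Complex.add_re] using this
    have r0 : (μf 0).re = 0 := by linarith [H0.1, H1.1, H2.1]
    have r1 : (μf 1).re = 0 := by linarith [H0.1, H1.1, H2.1]
    have r2 : (μf 2).re = 0 := by linarith [H0.1, H1.1, H2.1]
    have him : (μf 0).im + (μf 1).im + (μf 2).im = 0 := by
      have := congrArg Complex.im hzero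
      simpa [Complex.add_im] using this
    have e0 := hW _ (H0.2 r0)
    have e1 := hW _ (H1.2 r1)
    have e2 := hW _ (H2.2 r2)
    rcases e0 with e0 | e0 <;> rcases e1 with e1 | e1 <;> rcases e2 with e2 | e2 <;>
      rw [e0, e1, e2] at him <;> linarith
  refine ⟨?_, ?_, ?_, ?_⟩
  · exact LD_X0_pow Cm hC0 3
  · show LD Cm (X 0 * rename Fin.succ ψ) = 0
    rw [LD_mul, LD_X0 Cm hC0, zero_mul, zero_add, LD_rename B Cm hC0' hCB, hLDψ, map_zero,
      mul_zero]
  · intro a b hab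
    have hc2 : coeff (Finsupp.single 0 3)
        (X (0 : Fin (n+1)) * rename Fin.succ ψ) = 0 := by
      have hsplit : (Finsupp.single (0 : Fin (n+1)) 3 : Fin (n+1) →₀ ℕ)
          = Finsupp.single 0 1 + Finsupp.single 0 2 := by
        rw [← Finsupp.single_add]
      rw [hsplit, coeff_X_mul]
      by_contra hne
      obtain ⟨u, hu, -⟩ := coeff_rename_ne_zero _ _ _ hne
      have h0 : Finsupp.mapDomain Fin.succ u 0 = 0 :=
        Finsupp.mapDomain_notin_range _ _ (by rintro ⟨x, hx⟩; exact Fin.succ_ne_zero x hx)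
      rw [hu] at h0
      simp [Finsupp.single_apply] at h0
    have heq := congrArg (coeff (Finsupp.single 0 3)) hab
    rw [coeff_add, coeff_smul, coeff_smul, hc2, X_pow_eq_monomial, coeff_monomial,
      if_pos rfl] at heq
    simp only [coeff_zero, smul_eq_mul, mul_one, mul_zero, add_zero] at heq
    refine ⟨heq, ?_⟩
    rw [heq, zero_smul, zero_add] at hab
    by_contra hb
    have hXne : (X (0 : Fin (n+1)) : MvPolynomial (Fin (n+1)) ℝ) ≠ 0 := X_ne_zero _
    have hrne : rename (Fin.succ) ψ ≠ 0 := by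
      intro h
      apply hψne
      apply rename_injective Fin.succ (Fin.succ_injective n)
      rw [h, map_zero]
    apply mul_ne_zero hXne hrne
    calc X (0 : Fin (n+1)) * rename Fin.succ ψ
        = b⁻¹ • (b • (X (0 : Fin (n+1)) * rename Fin.succ ψ)) := by
          rw [smul_smul, inv_mul_cancel₀ hb, one_smul]
      _ = 0 := by rw [hab, smul_zero]
  · intro φ hφhom hφker
    have hLDφ : LD Cm φ = 0 := hφker
    have hdec := decomp φ hφhom
    have hexp : LD Cm φ = ∑ k ∈ Finset.range 4,
        (X 0 : MvPolynomial (Fin (n+1)) ℝ) ^ k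
          * rename Fin.succ (LD B ((finSuccEquiv ℝ n φ).coeff k)) := by
      conv_lhs => rw [hdec]
      rw [map_sum]
      refine Finset.sum_congr rfl fun k _ => ?_
      rw [LD_mul, LD_X0_pow Cm hC0, zero_mul, zero_add, LD_rename B Cm hC0' hCB]
    have hkill := coeffs_zero (fun k => LD B ((finSuccEquiv ℝ n φ).coeff k))
      (by rw [← hexp]; exact hLDφ)
    have hhom : ∀ k j : ℕ, k + j = 3 → ((finSuccEquiv ℝ n φ).coeff k).IsHomogeneous j :=
      fun k j hkj => hφhom.finSuccEquiv_coeff_isHomogeneous k j hkj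
    have h2 : (finSuccEquiv ℝ n φ).coeff 2 = 0 :=
      lieDeriv_hom_eq_zero B hsum1 (hhom 2 1 rfl) (hkill 2 (by norm_num))
    have h0 : (finSuccEquiv ℝ n φ).coeff 0 = 0 :=
      lieDeriv_hom_eq_zero B hsum3 (hhom 0 3 rfl) (hkill 0 (by norm_num))
    obtain ⟨b, hb⟩ := hψspan _ (hhom 1 2 rfl) (hkill 1 (by norm_num))
    have h3 : (finSuccEquiv ℝ n φ).coeff 3
        = MvPolynomial.C (coeff 0 ((finSuccEquiv ℝ n φ).coeff 3)) := by
      apply MvPolynomial.ext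
      intro d
      rcases eq_or_ne d 0 with rfl | hd
      · simp [coeff_C]
      · rw [coeff_C, if_neg (Ne.symm hd), (hhom 3 0 rfl).coeff_eq_zero]
        rw [Ne, Finsupp.degree_eq_zero_iff]
        exact hd
    obtain ⟨a, ha3⟩ : ∃ a : ℝ, (finSuccEquiv ℝ n φ).coeff 3 = MvPolynomial.C a := ⟨_, h3⟩
    refine ⟨a, b, ?_⟩
    conv_lhs => rw [hdec]
    rw [Finset.sum_range_succ, Finset.sum_range_succ, Finset.sum_range_succ,
      Finset.sum_range_one]
    rw [h0, h2, hb, ha3]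
    simp only [map_zero, mul_zero, zero_add, add_zero, pow_zero, pow_one, _root_.map_smul, rename_C]
    rw [MvPolynomial.smul_eq_C_mul, MvPolynomial.smul_eq_C_mul, MvPolynomial.smul_eq_C_mul]
    ring
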